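/- arXiv:2312.01319 — 2 statements merged into one kernel-verified Lean document; each statement's English description precedes it below -/
import Mathlib

section
/- Let (a_n)_{n≥1} be a sequence of positive reals with δ := a₁ + Σ_{n=1}^∞ a_{n+1}/a_n < 1/8. Then for any Lebesgue measurable set E ⊆ [0,1] with L(E) > 1/2 + 4δ, there exists a map f : ℝ → ℝ such that f(a_n) ∈ E for all n ≥ 1 and (1/2)|x-y| ≤ |f(x)-f(y)| ≤ (3/(1-δ))|x-y| for all x, y ∈ ℝ. -/
open MeasureTheory

lemma construct13 (E : Set ℝ) (b e : ℕ → ℝ) (t : ℝ)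
    (hb0 : ∀ n, 0 < b n) (hb3 : ∀ n, 3 * b (n+1) ≤ b n)
    (hsmall : ∀ x, 0 < x → ∃ k, b k < x)
    (hel : ∀ n, t + b n ≤ e n) (heu : ∀ n, e n ≤ t + 2 * b n) :
    ∃ f : ℝ → ℝ, (∀ n, f (b n) = e n) ∧
      ∀ x y : ℝ, x < y → (1/2) * (y - x) ≤ f y - f x ∧ f y - f x ≤ 3 * (y - x) := by
  classical
  have hbmono : ∀ n, b (n+1) < b n := fun n => lt_of_lt_of_le (by nlinarith [hb0 (n+1)]) (hb3 n)
  have hbanti : StrictAnti b := strictAnti_nat_of_succ_lt hbmono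
  set s : ℕ → ℝ := fun k => if k = 0 then 1 else (e (k-1) - e k) / (b (k-1) - b k) with hs_def
  have hs : ∀ k, 1/2 ≤ s k ∧ s k ≤ 3 := by
    intro k
    cases k with
    | zero => simp [hs_def]; norm_num
    | succ k =>
      have hd : 0 < b k - b (k+1) := sub_pos.2 (hbmono k)
      have h1 := hel k; have h2 := heu k; have h3 := hel (k+1); have h4 := heu (k+1)
      have hb := hb3 k
      have heq : s (k+1) = (e k - e (k+1)) / (b k - b (k+1)) := by
        simp [hs_def]
      rw [heq]
      constructor
      · rw [le_div_iff₀ hd]; nlinarith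
      · rw [div_le_iff₀ hd]; nlinarith
  -- the index function
  let nn : ∀ x : ℝ, 0 < x → ℕ := fun x hx => Nat.find (hsmall x hx)
  have nspec1 : ∀ x (hx : 0 < x), b (nn x hx) < x := fun x hx => Nat.find_spec (hsmall x hx)
  have nspec2 : ∀ x (hx : 0 < x) k, k < nn x hx → x ≤ b k := by
    intro x hx k hk
    exact le_of_not_gt (Nat.find_min (hsmall x hx) hk)
  set f : ℝ → ℝ := fun x =>
    if hx : 0 < x then e (nn x hx) + (x - b (nn x hx)) * s (nn x hx) else t + x with hf_def
  have hfpos : ∀ x (hx : 0 < x), f x = e (nn x hx) + (x - b (nn x hx)) * s (nn x hx) := by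
    intro x hx; simp only [hf_def, dif_pos hx]
  have hfneg : ∀ x, ¬(0 < x) → f x = t + x := by
    intro x hx; simp only [hf_def, dif_neg hx]
  -- index of b m is m+1
  have hnb : ∀ m (h : 0 < b m), nn (b m) h = m + 1 := by
    intro m h
    rw [show nn (b m) h = Nat.find (hsmall (b m) h) from rfl, Nat.find_eq_iff]
    refine ⟨hbmono m, ?_⟩
    intro k hk
    push_neg
    exact hbanti.antitone (Nat.lt_succ_iff.1 hk)
  have hfb : ∀ m, f (b m) = e m := by
    intro m
    rw [hfpos (b m) (hb0 m), hnb m (hb0 m)]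
    have hd : b m - b (m+1) ≠ 0 := ne_of_gt (sub_pos.2 (hbmono m))
    have : s (m+1) = (e m - e (m+1)) / (b m - b (m+1)) := by simp [hs_def]
    rw [this]
    field_simp
    ring
  -- distance to t
  have hft : ∀ y (hy : 0 < y), y/2 ≤ f y - t ∧ f y - t ≤ 3 * y := by
    intro y hy
    rw [hfpos y hy]
    set m := nn y hy with hm
    have h1 : b m < y := nspec1 y hy
    have h2 := hel m; have h3 := heu m
    have h4 := hs m
    have hb := hb0 m
    have hyb : 0 < y - b m := sub_pos.2 h1
    constructor
    · nlinarith [h4.1, h4.2]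
    · nlinarith [h4.1, h4.2]
  -- main induction
  have key : ∀ d : ℕ, ∀ x y (hx : 0 < x) (hxy : x < y),
      nn x hx - nn y (hx.trans hxy) ≤ d →
      (1/2) * (y - x) ≤ f y - f x ∧ f y - f x ≤ 3 * (y - x) := by
    intro d
    induction d with
    | zero =>
      intro x y hx hxy hle
      have hy : 0 < y := hx.trans hxy
      have hxy' : nn y hy ≤ nn x hx := Nat.find_min' _ ((nspec1 x hx).trans hxy)
      have heqn : nn x hx = nn y hy := by omega
      rw [hfpos x hx, hfpos y hy, heqn]
      have h4 := hs (nn y hy)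
      constructor <;> nlinarith [h4.1, h4.2]
    | succ d ih =>
      intro x y hx hxy hle
      have hy : 0 < y := hx.trans hxy
      set m := nn y hy with hm
      by_cases hc : nn x hx ≤ m
      · have hxy' : m ≤ nn x hx := Nat.find_min' _ ((nspec1 x hx).trans hxy)
        have heqn : nn x hx = m := le_antisymm hc hxy'
        rw [hfpos x hx, hfpos y hy, heqn]
        have h4 := hs m
        constructor <;> nlinarith [h4.1, h4.2]
      · push_neg at hc
        have hxb : x ≤ b m := nspec2 x hx m hc
        have hby : b m < y := nspec1 y hy
        -- difference between y and b m
        have hyp : f y - f (b m) = (y - b m) * s m := by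
          rw [hfpos y hy, hfb m]; ring
        have h4 := hs m
        rcases eq_or_lt_of_le hxb with hxe | hxlt
        · have heq : f y - f x = (y - x) * s m := by
            rw [hxe, hfpos y hy, hfb m]; ring
          rw [heq]
          constructor <;> nlinarith [h4.1, h4.2]
        · have hnbm : nn (b m) (hb0 m) = m + 1 := hnb m (hb0 m)
          have hfuel : nn x hx - nn (b m) (hb0 m) ≤ d := by
            have : nn (b m) (hb0 m) ≤ nn x hx := Nat.find_min' _ ((nspec1 x hx).trans hxlt)
            omega
          have h5 := ih x (b m) hx hxlt hfuel
          have hyb : 0 < y - b m := sub_pos.2 hby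
          constructor
          · have : (1/2) * (y - b m) ≤ f y - f (b m) := by rw [hyp]; nlinarith [h4.1]
            linarith [h5.1]
          · have : f y - f (b m) ≤ 3 * (y - b m) := by rw [hyp]; nlinarith [h4.2]
            linarith [h5.2]
  refine ⟨f, hfb, ?_⟩
  intro x y hxy
  rcases le_or_gt y 0 with hy | hy
  · rw [hfneg x (by linarith), hfneg y (by linarith)]
    constructor <;> linarith
  · rcases le_or_gt x 0 with hx | hx
    · rw [hfneg x (by linarith)]
      have h1 := hft y hy
      constructor <;> [linarith [h1.1]; linarith [h1.2]]
    · exact key (nn x hx) x y hx hxy (Nat.sub_le _ _)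


open Set in
lemma goodt13 (E : Set ℝ) (hE : MeasurableSet E) (hE1 : E ⊆ Set.Icc 0 1)
    (b : ℕ → ℝ) (hb0 : ∀ n, 0 < b n) (hbmono : ∀ n, b (n+1) ≤ b n)
    (hgap : 2 * (1 - (volume E).toReal) < 1 - 2 * b 0) :
    ∃ t : ℝ, ∀ n : ℕ, ∃ z, z ∈ E ∧ (t + b n ≤ z ∧ z ≤ t + 2 * b n) := by
  classical
  by_contra hcon
  push_neg at hcon
  have hble : ∀ n, b n ≤ b 0 := by
    intro n
    induction n with
    | zero => exact le_refl _
    | succ n ih => exact (hbmono n).trans ih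
  -- complement within [0,1]
  set F : Set ℝ := Set.Icc 0 1 \ E with hF
  have hFm : MeasurableSet F := measurableSet_Icc.diff hE
  have hIccvol : volume (Set.Icc (0:ℝ) 1) = 1 := by
    rw [Real.volume_Icc]; norm_num
  have hEfin : volume E ≠ ⊤ := by
    refine ne_top_of_le_ne_top ?_ (measure_mono hE1)
    rw [hIccvol]; exact ENNReal.one_ne_top
  have hFvol : (volume F).toReal = 1 - (volume E).toReal := by
    rw [hF, measure_diff hE1 hE.nullMeasurableSet hEfin, hIccvol]
    rw [ENNReal.toReal_sub_of_le (by rw [← hIccvol]; exact measure_mono hE1) ENNReal.one_ne_top]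
    simp
  have hFfin : volume F ≠ ⊤ := by
    refine ne_top_of_le_ne_top ?_ (measure_mono (diff_subset : F ⊆ Set.Icc 0 1))
    rw [hIccvol]; exact ENNReal.one_ne_top
  -- the eroded sets
  set C : ℕ → Set ℝ := fun n => {x | ∀ z, z ∈ E → ¬(x ≤ z ∧ z ≤ x + b n)} with hC
  have hmemc : ∀ n x, x ∈ (C n)ᶜ ↔ ∃ z, z ∈ E ∧ x ≤ z ∧ z ≤ x + b n := by
    intro n x
    simp only [hC, mem_compl_iff, mem_setOf_eq, not_forall, _root_.not_imp, not_not, exists_prop]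
  have hCm : ∀ n, MeasurableSet (C n) := by
    intro n
    have hcompl : (C n)ᶜ = (⋃ z ∈ E, Set.Ioo (z - b n) z) ∪ (((fun y => y + b n) ⁻¹' E) ∪ E) := by
      ext x
      rw [hmemc n x]
      simp only [mem_union, mem_iUnion, mem_preimage, mem_Ioo, exists_prop]
      constructor
      · rintro ⟨z, hz, h1, h2⟩
        rcases eq_or_lt_of_le h1 with rfl | h1'
        · right; right; exact hz
        · rcases eq_or_lt_of_le h2 with h2e | h2'
          · right; left; rw [← h2e]; exact hz
          · left; exact ⟨z, hz, by linarith, h1'⟩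
      · rintro (⟨z, hz, h1, h2⟩ | h | h)
        · exact ⟨z, hz, le_of_lt h2, by linarith⟩
        · exact ⟨x + b n, h, by linarith [hb0 n], le_refl _⟩
        · exact ⟨x, h, le_refl _, by linarith [hb0 n]⟩
    have hmc : MeasurableSet ((C n)ᶜ) := by
      rw [hcompl]
      exact ((isOpen_biUnion fun z _ => isOpen_Ioo).measurableSet).union
        ((hE.preimage (measurable_add_const _)).union hE)
    simpa using hmc.compl
  -- monotonicity facts
  have hCmono : ∀ m n, m ≤ n → C m ⊆ C n := by
    intro m n hmn
    have hbn : b n ≤ b m := by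
      clear hcon
      induction n with
      | zero => have : m = 0 := Nat.le_zero.1 hmn; rw [this]
      | succ n ih =>
        rcases Nat.lt_or_ge m (n+1) with h | h
        · exact (hbmono n).trans (ih (Nat.lt_succ_iff.1 h))
        · have : m = n + 1 := le_antisymm hmn h
          rw [this]
    intro x hx z hz hzz
    exact hx z hz ⟨hzz.1, hzz.2.trans (by linarith)⟩
  have hCshift : ∀ n x, x ∈ C n → x + (b n - b (n+1)) ∈ C (n+1) := by
    intro n x hx z hz hzz
    refine hx z hz ⟨?_, ?_⟩
    · linarith [hzz.1, hbmono n]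
    · linarith [hzz.2]
  have hCnotE : ∀ n x, x ∈ C n → x ∉ E := by
    intro n x hx hxE
    exact hx x hxE ⟨le_refl _, by linarith [hb0 n]⟩
  -- windows
  set V : Set ℝ := Set.Icc 0 (1 - b 0) with hV
  set W : Set ℝ := Set.Icc 0 (1 - 2 * b 0) with hW
  set D : ℕ → Set ℝ := fun n => (C (n+1) \ C n) ∩ V with hD
  have hDm : ∀ n, MeasurableSet (D n) := fun n =>
    (((hCm (n+1)).diff (hCm n)).inter measurableSet_Icc)
  have hDF : ∀ n, D n ⊆ F := by
    intro n x hx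
    refine ⟨?_, hCnotE (n+1) x hx.1.1⟩
    have := hx.2
    rw [hV] at this
    exact ⟨this.1, this.2.trans (by linarith [hb0 0])⟩
  have hC0F : C 0 ∩ V ⊆ F := by
    intro x hx
    refine ⟨?_, hCnotE 0 x hx.1⟩
    have := hx.2
    rw [hV] at this
    exact ⟨this.1, this.2.trans (by linarith [hb0 0])⟩
  have hDdisj' : ∀ m n, m < n → Disjoint (D m) (D n) := by
    intro m n hmn
    rw [Set.disjoint_left]
    intro x hxm hxn
    exact hxn.1.2 (hCmono (m+1) n hmn hxm.1.1)
  have hDdisj : Pairwise (Function.onFun Disjoint D) := by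
    intro m n hmn
    rcases hmn.lt_or_gt with h | h
    · exact hDdisj' m n h
    · exact (hDdisj' n m h).symm
  -- Bad sets
  set Bad : ℕ → Set ℝ := fun n => {x : ℝ | x + b n ∈ C n} with hBad
  have hWBad : W ⊆ ⋃ n, (Bad n ∩ W) := by
    intro x hx
    obtain ⟨n, hn⟩ := hcon x
    refine Set.mem_iUnion.2 ⟨n, ?_, hx⟩
    intro z hz hzz
    have h := hn z hz hzz.1
    linarith [hzz.2]
  -- the big covering set
  set Big : Set ℝ := ((fun u => u + b 0) ⁻¹' (C 0 ∩ V)) ∪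
      ⋃ n, (((fun u => u + b (n+1)) ⁻¹' D n) ∪ ((fun u => u + b n) ⁻¹' D n)) with hBig
  have hBadsub : ∀ N, Bad N ∩ W ⊆ Big := by
    intro N
    induction N with
    | zero =>
      intro x hx
      left
      refine Set.mem_preimage.2 ⟨hx.1, ?_⟩
      have hxW := hx.2
      rw [hW] at hxW
      rw [hV]
      refine ⟨?_, ?_⟩
      · show (0:ℝ) ≤ x + b 0
        linarith [hxW.1, (hb0 0).le]
      · show x + b 0 ≤ 1 - b 0
        linarith [hxW.2]
    | succ N ih =>
      intro x hx
      have hxW := hx.2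
      have hxW' := hxW
      rw [hW] at hxW'
      by_cases h1 : x + b N ∈ C N
      · exact ih ⟨h1, hxW⟩
      · have hxC : x + b (N+1) ∈ C (N+1) := hx.1
        by_cases h2 : x + b (N+1) ∈ C N
        · -- shift up
          have h3 : x + b (N+1) + (b N - b (N+1)) ∈ C (N+1) := hCshift N _ h2
          have h4 : x + b N ∈ C (N+1) := by
            have : x + b (N+1) + (b N - b (N+1)) = x + b N := by ring
            rwa [this] at h3
          right
          refine Set.mem_iUnion.2 ⟨N, Or.inr (Set.mem_preimage.2 ⟨⟨h4, h1⟩, ?_⟩)⟩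
          rw [hV]
          refine ⟨?_, ?_⟩
          · show (0:ℝ) ≤ x + b N
            linarith [hxW'.1, (hb0 N).le]
          · show x + b N ≤ 1 - b 0
            linarith [hxW'.2, hble N, (hb0 0).le]
        · right
          refine Set.mem_iUnion.2 ⟨N, Or.inl (Set.mem_preimage.2 ⟨⟨hxC, h2⟩, ?_⟩)⟩
          rw [hV]
          refine ⟨?_, ?_⟩
          · show (0:ℝ) ≤ x + b (N+1)
            linarith [hxW'.1, (hb0 (N+1)).le]
          · show x + b (N+1) ≤ 1 - b 0
            linarith [hxW'.2, hble (N+1), (hb0 0).le]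
  -- measures
  have hpre : ∀ (sh : ℝ) (A : Set ℝ), volume ((fun u => u + sh) ⁻¹' A) = volume A := by
    intro sh A
    exact measure_preimage_add_right volume sh A
  have hdisjU : Disjoint (C 0 ∩ V) (⋃ n, D n) := by
    rw [Set.disjoint_iUnion_right]
    intro n
    rw [Set.disjoint_left]
    intro x hx hxn
    exact hxn.1.2 (hCmono 0 n (Nat.zero_le n) hx.1)
  have hUvol : volume (⋃ n, D n) = ∑' n, volume (D n) := measure_iUnion hDdisj hDm
  have hsum1 : volume (C 0 ∩ V) + ∑' n, volume (D n) ≤ volume F := by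
    calc volume (C 0 ∩ V) + ∑' n, volume (D n)
        = volume ((C 0 ∩ V) ∪ ⋃ n, D n) := by
          rw [measure_union hdisjU (MeasurableSet.iUnion hDm), hUvol]
      _ ≤ volume F := measure_mono (Set.union_subset hC0F (Set.iUnion_subset hDF))
  have htsum : ∑' n, volume (D n) ≤ volume F := le_trans le_add_self hsum1
  have hBigle : volume Big ≤ volume F + volume F := by
    have h1 : volume ((fun u => u + b 0) ⁻¹' (C 0 ∩ V)) = volume (C 0 ∩ V) := hpre _ _
    calc volume Big
        ≤ volume ((fun u => u + b 0) ⁻¹' (C 0 ∩ V)) +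
          volume (⋃ n, (((fun u => u + b (n+1)) ⁻¹' D n) ∪ ((fun u => u + b n) ⁻¹' D n))) :=
          measure_union_le _ _
      _ ≤ volume (C 0 ∩ V) + ∑' n, (volume (D n) + volume (D n)) := by
          refine add_le_add (le_of_eq h1) ((measure_iUnion_le _).trans
            (ENNReal.tsum_le_tsum fun n => (measure_union_le _ _).trans ?_))
          rw [hpre, hpre]
      _ = (volume (C 0 ∩ V) + ∑' n, volume (D n)) + ∑' n, volume (D n) := by
          rw [ENNReal.tsum_add]; ring
      _ ≤ volume F + volume F := add_le_add hsum1 htsum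
  have hWle : volume W ≤ volume F + volume F := by
    refine (measure_mono (hWBad.trans (Set.iUnion_subset fun N => ?_))).trans hBigle
    exact hBadsub N
  have hE1' : (volume E).toReal ≤ 1 := by
    have h : volume E ≤ volume (Set.Icc (0:ℝ) 1) := measure_mono hE1
    rw [hIccvol] at h
    calc (volume E).toReal ≤ (1 : ENNReal).toReal := ENNReal.toReal_mono ENNReal.one_ne_top h
      _ = 1 := by simp
  have hWvol : volume W = ENNReal.ofReal (1 - 2 * b 0) := by
    rw [hW, Real.volume_Icc]; norm_num
  have hfinal : volume F + volume F < ENNReal.ofReal (1 - 2 * b 0) := by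
    have h2 : volume F + volume F = ENNReal.ofReal ((volume F).toReal + (volume F).toReal) := by
      rw [ENNReal.ofReal_add ENNReal.toReal_nonneg ENNReal.toReal_nonneg,
        ENNReal.ofReal_toReal hFfin]
    rw [h2]
    have hlt : (volume F).toReal + (volume F).toReal < 1 - 2 * b 0 := by
      rw [hFvol]; linarith
    exact (ENNReal.ofReal_lt_ofReal_iff (by linarith [hE1'])).2 hlt
  rw [hWvol] at hWle
  exact absurd (lt_of_le_of_lt hWle hfinal) (lt_irrefl _)


theorem stmt13 (a : ℕ → ℝ) (hpos : ∀ n ≥ 1, 0 < a n)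
    (hsum : Summable (fun n : ℕ => a (n + 2) / a (n + 1)))
    (δ : ℝ) (hδ : δ = a 1 + ∑' n : ℕ, a (n + 2) / a (n + 1)) (hδlt : δ < 1/8)
    (E : Set ℝ) (hE : MeasurableSet E) (hE1 : E ⊆ Set.Icc (0:ℝ) 1)
    (hEpos : 1/2 + 4 * δ < (volume E).toReal) :
    ∃ f : ℝ → ℝ, (∀ n ≥ 1, f (a n) ∈ E) ∧
      ∀ x y : ℝ, (1/2) * |x - y| ≤ |f x - f y| ∧ |f x - f y| ≤ (3 / (1 - δ)) * |x - y| := by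
  classical
  set b : ℕ → ℝ := fun n => a (n + 1) with hb
  have hb0 : ∀ n, 0 < b n := fun n => hpos (n+1) (Nat.le_add_left 1 n)
  have htnn : (0:ℝ) ≤ ∑' n : ℕ, a (n + 2) / a (n + 1) :=
    tsum_nonneg fun i => div_nonneg (hpos (i+2) (by omega)).le (hpos (i+1) (by omega)).le
  have ha1δ : a 1 ≤ δ := by rw [hδ]; linarith
  have hδ0 : 0 < δ := lt_of_lt_of_le (hpos 1 le_rfl) ha1δ
  have hterm : ∀ k : ℕ, a (k + 2) / a (k + 1) ≤ δ - a 1 := by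
    intro k
    have h := Summable.le_tsum hsum k
      (fun i _ => div_nonneg (hpos (i+2) (by omega)).le (hpos (i+1) (by omega)).le)
    rw [hδ]; linarith [h]
  have hb8 : ∀ n, 8 * b (n+1) ≤ b n := by
    intro n
    have h1 := hterm n
    have h2 : 0 < a (n + 1) := hpos (n+1) (by omega)
    have h3 : a (n + 2) ≤ (δ - a 1) * a (n + 1) := by
      rw [div_le_iff₀ h2] at h1; exact h1
    have h4 : 0 < a 1 := hpos 1 le_rfl
    show 8 * a (n + 1 + 1) ≤ a (n + 1)
    have : (δ - a 1) ≤ 1/8 := by linarith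
    nlinarith [h3, h2]
  have hb3 : ∀ n, 3 * b (n+1) ≤ b n := by
    intro n
    have := hb8 n
    have := (hb0 (n+1)).le
    linarith
  have hbmono : ∀ n, b (n+1) ≤ b n := by
    intro n
    have := hb8 n
    have := (hb0 (n+1)).le
    linarith
  have hpow : ∀ k, b k ≤ b 0 * (1/8)^k := by
    intro k
    induction k with
    | zero => simp
    | succ k ih =>
      have h1 := hb8 k
      have h2 : (0:ℝ) < (1/8)^k := by positivity
      calc b (k+1) ≤ b k / 8 := by linarith
        _ ≤ (b 0 * (1/8)^k) / 8 := by linarith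
        _ = b 0 * (1/8)^(k+1) := by ring
  have hsmall : ∀ x : ℝ, 0 < x → ∃ k, b k < x := by
    intro x hx
    obtain ⟨k, hk⟩ := exists_pow_lt_of_lt_one (div_pos hx (hb0 0)) (by norm_num : (1/8:ℝ) < 1)
    refine ⟨k, lt_of_le_of_lt (hpow k) ?_⟩
    calc b 0 * (1/8)^k < b 0 * (x / b 0) := by
          exact mul_lt_mul_of_pos_left hk (hb0 0)
      _ = x := by rw [mul_comm]; exact div_mul_cancel₀ x (ne_of_gt (hb0 0))
  have hgap : 2 * (1 - (volume E).toReal) < 1 - 2 * b 0 := by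
    have h4 : 0 < a 1 := hpos 1 le_rfl
    show 2 * (1 - (volume E).toReal) < 1 - 2 * a 1
    linarith
  obtain ⟨t, hgood⟩ := goodt13 E hE hE1 b hb0 hbmono hgap
  choose e he using hgood
  obtain ⟨f, hfb, hflip⟩ := construct13 E b e t hb0 hb3 hsmall
    (fun n => (he n).2.1) (fun n => (he n).2.2)
  have h1δ : 0 < 1 - δ := by linarith
  have hK : (3:ℝ) ≤ 3 / (1 - δ) := by
    rw [le_div_iff₀ h1δ]; nlinarith
  have hmain : ∀ x y : ℝ, x < y →
      (1/2) * (y - x) ≤ |f x - f y| ∧ |f x - f y| ≤ (3 / (1 - δ)) * (y - x) := by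
    intro x y hxy
    obtain ⟨hl, hu⟩ := hflip x y hxy
    have hyx : 0 < y - x := sub_pos.2 hxy
    have hfpos : 0 < f y - f x := lt_of_lt_of_le (by linarith) hl
    have habs : |f x - f y| = f y - f x := by
      rw [abs_sub_comm]; exact abs_of_pos hfpos
    rw [habs]
    refine ⟨hl, hu.trans ?_⟩
    nlinarith [hK, hyx.le]
  refine ⟨f, ?_, ?_⟩
  · intro n hn
    obtain ⟨m, rfl⟩ : ∃ m, n = m + 1 := ⟨n - 1, (Nat.succ_pred_eq_of_pos hn).symm⟩
    have : f (a (m+1)) = e m := hfb m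
    rw [this]
    exact (he m).1
  · intro x y
    rcases lt_trichotomy x y with h | h | h
    · have h2 := hmain x y h
      have habs : |x - y| = y - x := by rw [abs_sub_comm]; exact abs_of_pos (sub_pos.2 h)
      rw [habs]
      exact h2
    · subst h
      simp [sub_self]
    · have h2 := hmain y x h
      have habs : |x - y| = x - y := abs_of_pos (sub_pos.2 h)
      rw [habs, abs_sub_comm]
      exact h2
end

section
/- Let (a_n)_{n≥1} be a sequence of positive reals with a₁ + Σ_{n=1}^∞ a_{n+1}/a_n < 1/8, and let A = {a_n : n ≥ 1}. Then the set F = ⋃_{n=1}^∞ 3^{-n}(1 + A) = {3^{-n}(1 + a_m) : n, m ≥ 1} is bi-Lipschitz measure universal: for every Lebesgue measurable E ⊆ ℝ of positive measure there exists a bi-Lipschitz map f : ℝ → ℝ with f(F) ⊆ E. -/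
open MeasureTheory Metric Set Filter

/-- hitting lemma: a quantitative-density point's ball windows meet S. -/
private lemma hitIcc {S : Set ℝ} {t R : ℝ}
    (hgood : ∀ r : ℝ, 0 < r → r ≤ R →
      ENNReal.ofReal ((2 - 1/15) * r) ≤ volume (S ∩ Metric.closedBall t r))
    {r α β : ℝ} (hr0 : 0 < r) (hrR : r ≤ R)
    (hsub : Set.Icc α β ⊆ Metric.closedBall t r) (hlen : r / 15 < β - α) :
    (S ∩ Set.Icc α β).Nonempty := by
  by_contra hne
  rw [Set.not_nonempty_iff_eq_empty] at hne
  have hdisj : Disjoint (S ∩ Metric.closedBall t r) (Set.Icc α β) := by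
    refine Set.disjoint_left.2 fun x hx hx2 => ?_
    have : x ∈ S ∩ Set.Icc α β := ⟨hx.1, hx2⟩
    simp [hne] at this
  have hu : volume ((S ∩ Metric.closedBall t r) ∪ Set.Icc α β)
      = volume (S ∩ Metric.closedBall t r) + volume (Set.Icc α β) :=
    measure_union hdisj measurableSet_Icc
  have hsub2 : (S ∩ Metric.closedBall t r) ∪ Set.Icc α β ⊆ Metric.closedBall t r :=
    Set.union_subset Set.inter_subset_right hsub
  have hle : volume (S ∩ Metric.closedBall t r) + volume (Set.Icc α β)
      ≤ ENNReal.ofReal (2 * r) := by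
    rw [← hu, ← Real.volume_closedBall t r]
    exact measure_mono hsub2
  have h1 := hgood r hr0 hrR
  rw [Real.volume_Icc] at hle
  have h3 : ENNReal.ofReal ((2 - 1/15) * r) + ENNReal.ofReal (β - α)
      ≤ ENNReal.ofReal (2*r) := le_trans (add_le_add h1 le_rfl) hle
  rw [← ENNReal.ofReal_add (by nlinarith) (by nlinarith)] at h3
  rw [ENNReal.ofReal_le_ofReal_iff (by nlinarith)] at h3
  nlinarith

private lemma goodClosed (E : Set ℝ) (R : ℝ) :
    IsClosed {t : ℝ | ∀ r : ℝ, 0 < r → r ≤ R →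
      ENNReal.ofReal ((2 - 1/15) * r) ≤ volume (E ∩ Metric.closedBall t r)} := by
  refine isClosed_of_closure_subset ?_
  intro t ht r hr0 hrR
  have seq : ∀ j : ℕ, ∃ u, (∀ r' : ℝ, 0 < r' → r' ≤ R →
      ENNReal.ofReal ((2 - 1/15) * r') ≤ volume (E ∩ Metric.closedBall u r'))
      ∧ dist t u < min r (1/(j+1)) := by
    intro j
    exact Metric.mem_closure_iff.1 ht (min r (1/(j+1))) (lt_min hr0 (by positivity))
  choose u hu hd using seq
  have key : ∀ j : ℕ, ENNReal.ofReal ((2 - 1/15) * (r - 1/(j+1)))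
      ≤ volume (E ∩ Metric.closedBall t r) := by
    intro j
    rcases le_or_gt (r - 1/((j:ℝ)+1)) 0 with h | h
    · have : ENNReal.ofReal ((2 - 1/15) * (r - 1/((j:ℝ)+1))) = 0 :=
        ENNReal.ofReal_eq_zero.2 (by nlinarith)
      exact this ▸ zero_le
    · have hdj := hd j
      have hd1 : dist t (u j) < r := lt_of_lt_of_le hdj (min_le_left _ _)
      have hd2 : dist t (u j) < 1/((j:ℝ)+1) := lt_of_lt_of_le hdj (min_le_right _ _)
      have hball : Metric.closedBall (u j) (r - dist t (u j)) ⊆ Metric.closedBall t r := by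
        intro z hz
        rw [Metric.mem_closedBall] at hz ⊢
        have h3 := dist_triangle z (u j) t
        have h4 : dist (u j) t = dist t (u j) := dist_comm _ _
        linarith
      have h5 := hu j (r - dist t (u j)) (by linarith) (by linarith [dist_nonneg (x := t) (y := u j)])
      refine le_trans ?_ (le_trans h5 (measure_mono (Set.inter_subset_inter_right _ hball)))
      apply ENNReal.ofReal_le_ofReal
      have := dist_nonneg (x := t) (y := u j)
      nlinarith
  have htR : Filter.Tendsto (fun j : ℕ => (2 - 1/15) * (r - 1/((j:ℝ)+1))) Filter.atTop
      (nhds ((2 - 1/15) * r)) := by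
    have h0 : Filter.Tendsto (fun j : ℕ => 1/((j:ℝ)+1)) Filter.atTop (nhds 0) :=
      tendsto_one_div_add_atTop_nhds_zero_nat
    have h1 := (tendsto_const_nhds (x := r) (f := Filter.atTop (α := ℕ))).sub h0
    rw [sub_zero] at h1
    exact h1.const_mul _
  have htend : Filter.Tendsto (fun j : ℕ => ENNReal.ofReal ((2 - 1/15) * (r - 1/((j:ℝ)+1))))
      Filter.atTop (nhds (ENNReal.ofReal ((2 - 1/15) * r))) :=
    (ENNReal.continuous_ofReal.tendsto _).comp htR
  exact le_of_tendsto htend (Filter.Eventually.of_forall key)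

private lemma density_good {S : Set ℝ} {x : ℝ}
    (hx : Filter.Tendsto
      (fun r => volume (S ∩ Metric.closedBall x r) / volume (Metric.closedBall x r))
      (nhdsWithin 0 (Set.Ioi 0)) (nhds 1)) :
    ∃ u : ℝ, 0 < u ∧ ∀ r : ℝ, 0 < r → r ≤ u →
      ENNReal.ofReal ((2 - 1/15) * r) ≤ volume (S ∩ Metric.closedBall x r) := by
  have hlt : ENNReal.ofReal (59/60) < 1 := by
    rw [← ENNReal.ofReal_one]
    exact (ENNReal.ofReal_lt_ofReal_iff (by norm_num)).2 (by norm_num)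
  have hev : (fun r => volume (S ∩ Metric.closedBall x r) / volume (Metric.closedBall x r)) ⁻¹'
      Set.Ici (ENNReal.ofReal (59/60)) ∈ nhdsWithin (0:ℝ) (Set.Ioi 0) := hx (Ici_mem_nhds hlt)
  obtain ⟨u, hu0, hsub⟩ := mem_nhdsGT_iff_exists_Ioc_subset.1 hev
  refine ⟨u, hu0, fun r hr0 hru => ?_⟩
  have hmem := hsub ⟨hr0, hru⟩
  simp only [Set.mem_preimage, Set.mem_Ici] at hmem
  have hB : volume (Metric.closedBall x r) = ENNReal.ofReal (2*r) := Real.volume_closedBall x r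
  have h0 : volume (Metric.closedBall x r) ≠ 0 := by
    rw [hB]; exact (ENNReal.ofReal_pos.2 (by linarith)).ne'
  have htop : volume (Metric.closedBall x r) ≠ ⊤ := by rw [hB]; exact ENNReal.ofReal_ne_top
  rw [ENNReal.le_div_iff_mul_le (Or.inl h0) (Or.inl htop)] at hmem
  refine le_trans ?_ hmem
  rw [hB, ← ENNReal.ofReal_mul (by norm_num)]
  exact ENNReal.ofReal_le_ofReal (by nlinarith)

set_option maxHeartbeats 2000000 in
theorem stmt14 (a : ℕ → ℝ) (hpos : ∀ n ≥ 1, 0 < a n)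
    (hsum : Summable (fun n : ℕ => a (n + 2) / a (n + 1)))
    (hδ : a 1 + ∑' n : ℕ, a (n + 2) / a (n + 1) < 1/8)
    (F : Set ℝ)
    (hF : F = {x : ℝ | ∃ n ≥ 1, ∃ m ≥ 1, x = (3 : ℝ) ^ (-(n : ℤ)) * (1 + a m)})
    (E : Set ℝ) (hE : MeasurableSet E) (hEpos : 0 < volume E) :
    ∃ f : ℝ → ℝ, (∃ L : ℝ, 1 < L ∧ ∀ x y : ℝ,
        L⁻¹ * |x - y| ≤ |f x - f y| ∧ |f x - f y| ≤ L * |x - y|) ∧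
      f '' F ⊆ E := by
  classical
  -- ## Part 1: facts about the sequence a
  have ha1 : a 1 < 1/8 := by
    have h0 : 0 ≤ ∑' n : ℕ, a (n + 2) / a (n + 1) :=
      tsum_nonneg (fun n => div_nonneg (hpos _ (by omega)).le (hpos _ (by omega)).le)
    linarith
  have hstep : ∀ m, 1 ≤ m → 8 * a (m+1) ≤ a m := by
    intro m hm
    have hterm : a (m+1) / a m ≤ ∑' n : ℕ, a (n + 2) / a (n + 1) := by
      have h := hsum.le_tsum (m-1)
        (fun j _ => div_nonneg (hpos _ (by omega)).le (hpos _ (by omega)).le)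
      have hm1 : m - 1 + 2 = m + 1 := by omega
      have hm2 : m - 1 + 1 = m := by omega
      rwa [hm1, hm2] at h
    have hpa := hpos m hm
    have h8 : a (m+1) / a m < 1/8 := lt_of_le_of_lt hterm (by linarith [hpos 1 le_rfl])
    rw [div_lt_iff₀ hpa] at h8
    nlinarith
  have hdec : ∀ m, 1 ≤ m → ∀ k, m ≤ k → a k ≤ a m := by
    intro m hm k hk
    induction k, hk using Nat.le_induction with
    | base => exact le_rfl
    | succ k hk ih =>
      have h1 := hstep k (le_trans hm hk)
      have h2 := hpos k (le_trans hm hk)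
      linarith
  have hub : ∀ m, 1 ≤ m → a m ≤ 1/8 := fun m hm => le_trans (hdec 1 le_rfl m hm) ha1.le
  have hgap : ∀ m k, 1 ≤ m → m < k → 8 * a k ≤ a m := by
    intro m k hm hk
    have h1 := hdec (m+1) (by omega) k (by omega)
    have h2 := hstep m hm
    linarith
  -- ## Part 2: facts about c n = 3^(-n)
  set c : ℕ → ℝ := fun n => (3:ℝ) ^ (-(n:ℤ)) with hc
  have hcpos : ∀ n, 0 < c n := fun n => zpow_pos (by norm_num) _
  have hcinv : ∀ n, c n = ((3:ℝ)^n)⁻¹ := by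
    intro n
    show (3:ℝ) ^ (-(n:ℤ)) = ((3:ℝ)^n)⁻¹
    rw [zpow_neg, zpow_natCast]
  have hcmono : ∀ n k, n ≤ k → c k ≤ c n := by
    intro n k h
    rw [hcinv, hcinv]
    exact inv_anti₀ (by positivity) (pow_le_pow_right₀ (by norm_num) h)
  have hc3 : ∀ n, c (n+1) = c n / 3 := by
    intro n; rw [hcinv, hcinv, pow_succ]
    rw [mul_inv]; ring
  have hcstep : ∀ n k, n < k → 3 * c k ≤ c n := by
    intro n k h
    have h1 := hcmono (n+1) k h
    rw [hc3] at h1; linarith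
  have hc13 : ∀ n, 1 ≤ n → c n ≤ 1/3 := by
    intro n h
    have h1 := hcstep 0 n h
    have h2 : c 0 = 1 := by rw [hcinv]; norm_num
    linarith
  -- ## Part 3: density setup
  set G : ℕ → Set ℝ := fun k => {t : ℝ | ∀ r : ℝ, 0 < r → r ≤ 1/(k+1) →
      ENNReal.ofReal ((2 - 1/15) * r) ≤ volume (E ∩ Metric.closedBall t r)} with hG
  have hGclosed : ∀ k, IsClosed (G k) := fun k => goodClosed E _
  have hae : ∀ᵐ x ∂(volume.restrict E), x ∈ ⋃ k, G k := by
    filter_upwards [Besicovitch.ae_tendsto_measure_inter_div volume E] with x hx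
    obtain ⟨u, hu0, hgood⟩ := density_good hx
    obtain ⟨k, hk⟩ := exists_nat_one_div_lt hu0
    refine Set.mem_iUnion.2 ⟨k, fun r hr0 hru => hgood r hr0 ?_⟩
    calc r ≤ 1/(k+1) := hru
      _ ≤ u := by push_cast at hk ⊢; linarith
  have hEsplit : ∃ k, 0 < volume (E ∩ G k) := by
    by_contra h
    push_neg at h
    have hnull : volume (⋃ k, (E ∩ G k)) = 0 :=
      measure_iUnion_null (fun k => le_antisymm (h k) zero_le)
    have h2 : volume ((⋃ k, G k)ᶜ ∩ E) = 0 := by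
      have h3 : volume.restrict E {x | x ∉ ⋃ k, G k} = 0 := hae
      rwa [Measure.restrict_apply' hE] at h3
    have hsub : E ⊆ ((⋃ k, G k)ᶜ ∩ E) ∪ ⋃ k, (E ∩ G k) := by
      intro x hx
      by_cases hxG : x ∈ ⋃ k, G k
      · exact Or.inr (Set.mem_iUnion.2 ⟨(Set.mem_iUnion.1 hxG).choose, hx,
          (Set.mem_iUnion.1 hxG).choose_spec⟩)
      · exact Or.inl ⟨hxG, hx⟩
    have : volume E ≤ 0 := by
      calc volume E ≤ volume (((⋃ k, G k)ᶜ ∩ E) ∪ ⋃ k, (E ∩ G k)) := measure_mono hsub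
        _ ≤ volume ((⋃ k, G k)ᶜ ∩ E) + volume (⋃ k, (E ∩ G k)) := measure_union_le _ _
        _ = 0 := by rw [h2, hnull, add_zero]
    exact absurd (le_antisymm this zero_le) (ne_of_gt hEpos)
  obtain ⟨k, hkpos⟩ := hEsplit
  set E' : Set ℝ := E ∩ G k with hE'
  have hE'meas : MeasurableSet E' := hE.inter (hGclosed k).measurableSet
  have hE'good : ∀ u, u ∈ E' → ∀ r : ℝ, 0 < r → r ≤ 1/(k+1) →
      ENNReal.ofReal ((2 - 1/15) * r) ≤ volume (E ∩ Metric.closedBall u r) :=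
    fun u hu => hu.2
  have hRpos : (0:ℝ) < 1/(k+1) := by positivity
  -- pick t₀ : density point of E'
  obtain ⟨t₀, ht₀E', r₀, hr₀pos, ht₀good⟩ :
      ∃ t₀, t₀ ∈ E' ∧ ∃ r₀ : ℝ, 0 < r₀ ∧ ∀ r : ℝ, 0 < r → r ≤ r₀ →
        ENNReal.ofReal ((2 - 1/15) * r) ≤ volume (E' ∩ Metric.closedBall t₀ r) := by
    have hbes := Besicovitch.ae_tendsto_measure_inter_div volume E'
    set T : Set ℝ := {x | Filter.Tendsto
      (fun r => volume (E' ∩ Metric.closedBall x r) / volume (Metric.closedBall x r))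
      (nhdsWithin 0 (Set.Ioi 0)) (nhds 1)} with hT
    have hTc : volume.restrict E' Tᶜ = 0 := by
      rw [ae_iff] at hbes
      exact hbes
    have hTpos : 0 < volume.restrict E' T := by
      by_contra h
      push_neg at h
      have h0 : volume.restrict E' T = 0 := le_antisymm h zero_le
      have h1 : volume.restrict E' Set.univ ≤ 0 := by
        have h2 : (Set.univ : Set ℝ) ⊆ T ∪ Tᶜ := by
          rw [Set.union_compl_self]
        calc volume.restrict E' Set.univ ≤ volume.restrict E' (T ∪ Tᶜ) := measure_mono h2
          _ ≤ volume.restrict E' T + volume.restrict E' Tᶜ := measure_union_le _ _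
          _ = 0 := by rw [h0, hTc, add_zero]
      rw [Measure.restrict_apply_univ] at h1
      exact absurd (le_antisymm h1 zero_le) (ne_of_gt hkpos)
    rw [Measure.restrict_apply' hE'meas] at hTpos
    obtain ⟨t₀, ht₀T, ht₀E'⟩ := nonempty_of_measure_ne_zero (ne_of_gt hTpos)
    obtain ⟨r₀, hr₀pos, hgood⟩ := density_good ht₀T
    exact ⟨t₀, ht₀E', r₀, hr₀pos, hgood⟩
  set lam : ℝ := min r₀ (1/(k+1)) with hlamdef
  have hlam : 0 < lam := lt_min hr₀pos hRpos
  have hlamr₀ : lam ≤ r₀ := min_le_left _ _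
  have hlamR : lam ≤ 1/(k+1) := min_le_right _ _
  -- ## Part 4: choose t n
  have htn : ∀ n : ℕ, ∃ tn, 1 ≤ n →
      (tn ∈ E' ∧ t₀ + lam * c n ≤ tn ∧ tn ≤ t₀ + lam * c n * (9/8)) := by
    intro n
    by_cases hn : 1 ≤ n
    · have hcn := hcpos n
      have hc13n := hc13 n hn
      have hr0 : 0 < lam * c n * (9/8) := by positivity
      have hrR : lam * c n * (9/8) ≤ r₀ := by nlinarith
      have hsub : Set.Icc (t₀ + lam * c n) (t₀ + lam * c n * (9/8)) ⊆
          Metric.closedBall t₀ (lam * c n * (9/8)) := by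
        intro z hz
        rw [Metric.mem_closedBall, Real.dist_eq, abs_le]
        obtain ⟨h1, h2⟩ := hz
        constructor <;> nlinarith [mul_pos hlam hcn]
      have hlen : (lam * c n * (9/8)) / 15 < (t₀ + lam * c n * (9/8)) - (t₀ + lam * c n) := by
        nlinarith [mul_pos hlam hcn]
      obtain ⟨tn, h1, h2⟩ := hitIcc ht₀good hr0 hrR hsub hlen
      exact ⟨tn, fun _ => ⟨h1, h2.1, h2.2⟩⟩
    · exact ⟨0, fun h => absurd h hn⟩
  choose t ht using htn
  -- ## Part 5: choose y n m
  have hyn : ∀ n m : ℕ, ∃ z, 1 ≤ n → 1 ≤ m →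
      (z ∈ E ∧ t n + (3/4) * (lam * c n * a m) ≤ z ∧ z ≤ t n + (5/4) * (lam * c n * a m)) := by
    intro n m
    by_cases hnm : 1 ≤ n ∧ 1 ≤ m
    · obtain ⟨hn, hm⟩ := hnm
      obtain ⟨htE'n, ht1, ht2⟩ := ht n hn
      have hgood := hE'good (t n) htE'n
      have hcn := hcpos n
      have ham := hpos m hm
      have hamu := hub m hm
      have hc13n := hc13 n hn
      have hr0 : 0 < (5/4) * (lam * c n * a m) := by positivity
      have hrR : (5/4) * (lam * c n * a m) ≤ 1/(k+1) := by
        have h1 : c n * a m ≤ (1/3)*(1/8) := by nlinarith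
        have h2 : (5/4) * (lam * c n * a m) ≤ lam := by nlinarith
        linarith
      have hsub : Set.Icc (t n + (3/4) * (lam * c n * a m)) (t n + (5/4) * (lam * c n * a m)) ⊆
          Metric.closedBall (t n) ((5/4) * (lam * c n * a m)) := by
        intro z hz
        rw [Metric.mem_closedBall, Real.dist_eq, abs_le]
        obtain ⟨h1, h2⟩ := hz
        constructor <;> nlinarith [mul_pos (mul_pos hlam hcn) ham]
      have hlen : ((5/4) * (lam * c n * a m)) / 15 <
          (t n + (5/4) * (lam * c n * a m)) - (t n + (3/4) * (lam * c n * a m)) := by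
        nlinarith [mul_pos (mul_pos hlam hcn) ham]
      obtain ⟨z, h1, h2⟩ := hitIcc hgood hr0 hrR hsub hlen
      exact ⟨z, fun _ _ => ⟨h1, h2.1, h2.2⟩⟩
    · exact ⟨0, fun h1 h2 => absurd ⟨h1, h2⟩ hnm⟩
  choose y hy using hyn
  -- ## Part 6: error bounds
  set err : ℕ → ℕ → ℝ := fun n m => y n m - t₀ - lam * (c n * (1 + a m)) with herrdef
  have hinner : ∀ n m, 1 ≤ n → 1 ≤ m →
      |y n m - t n - lam * c n * a m| ≤ lam * c n * a m / 4 := by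
    intro n m hn hm
    obtain ⟨_, hy1, hy2⟩ := hy n m hn hm
    rw [abs_le]
    constructor <;> linarith
  have herrbd : ∀ n m, 1 ≤ n → 1 ≤ m → |err n m| ≤ lam * c n * (5/32) := by
    intro n m hn hm
    obtain ⟨_, ht1, ht2⟩ := ht n hn
    have h2 := hinner n m hn hm
    have hcn := hcpos n
    have ham := hpos m hm
    have hamu := hub m hm
    have hlc : 0 < lam * c n := mul_pos hlam hcn
    rw [abs_le] at h2 ⊢
    have hrw : err n m = (t n - t₀ - lam * c n) + (y n m - t n - lam * c n * a m) := by
      simp only [herrdef]; ring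
    rw [hrw]
    constructor <;> nlinarith
  -- ## Part 7: key Lipschitz estimate
  have key : ∀ n m n' m', 1 ≤ n → 1 ≤ m → 1 ≤ n' → 1 ≤ m' →
      |err n m - err n' m'| ≤ lam/2 * |c n * (1 + a m) - c n' * (1 + a m')| := by
    have habs2 : ∀ A B : ℝ, |A - B| ≤ |A| + |B| := by
      intro A B
      calc |A - B| = |A + (-B)| := by rw [sub_eq_add_neg]
        _ ≤ |A| + |(-B)| := abs_add_le _ _
        _ = |A| + |B| := by rw [abs_neg]
    have main : ∀ n m n' m', 1 ≤ n → 1 ≤ m → 1 ≤ n' → 1 ≤ m' →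
        (n < n' ∨ (n = n' ∧ m < m')) →
        |err n m - err n' m'| ≤ lam/2 * (c n * (1 + a m) - c n' * (1 + a m')) ∧
        0 ≤ c n * (1 + a m) - c n' * (1 + a m') := by
      intro n m n' m' hn hm hn' hm' hcase
      rcases hcase with hlt | ⟨heq, hmm⟩
      · -- different clusters
        have h3 := hcstep n n' hlt
        have hcn := hcpos n
        have hcn' := hcpos n'
        have ham := hpos m hm
        have ham' := hpos m' hm'
        have hamu := hub m hm
        have hamu' := hub m' hm'
        have hb1 := herrbd n m hn hm
        have hb2 := herrbd n' m' hn' hm'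
        have p1 : c n' * a m' ≤ c n' * (1/8) := mul_le_mul_of_nonneg_left hamu' hcn'.le
        have p2 : 0 ≤ c n * a m := mul_nonneg hcn.le ham.le
        have hD : (5/8) * c n ≤ c n * (1 + a m) - c n' * (1 + a m') := by nlinarith
        refine ⟨?_, by nlinarith⟩
        have h9 := habs2 (err n m) (err n' m')
        have q2 : lam * (3 * c n') ≤ lam * c n := mul_le_mul_of_nonneg_left h3 hlam.le
        have q1 : lam * ((5/8) * c n) ≤ lam * (c n * (1 + a m) - c n' * (1 + a m')) :=
          mul_le_mul_of_nonneg_left hD hlam.le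
        nlinarith [mul_pos hlam hcn]
      · -- same cluster
        subst heq
        have hg := hgap m m' hm hmm
        have ham := hpos m hm
        have ham' := hpos m' hm'
        have hcn := hcpos n
        have h1 := hinner n m hn hm
        have h2 := hinner n m' hn hm'
        have hlc : 0 ≤ lam * c n := (mul_pos hlam hcn).le
        have q3 : (lam * c n) * (8 * a m') ≤ (lam * c n) * a m :=
          mul_le_mul_of_nonneg_left hg hlc
        have hexp : err n m - err n m' =
            (y n m - t n - lam * c n * a m) - (y n m' - t n - lam * c n * a m') := by
          simp only [herrdef]; ring
        constructor
        · rw [hexp]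
          have h9 := habs2 (y n m - t n - lam * c n * a m) (y n m' - t n - lam * c n * a m')
          nlinarith
        · have hgg : a m' ≤ a m := by linarith
          nlinarith [mul_nonneg hcn.le (sub_nonneg.2 hgg)]
    intro n m n' m' hn hm hn' hm'
    rcases Nat.lt_trichotomy n n' with h | h | h
    · obtain ⟨h1, h2⟩ := main n m n' m' hn hm hn' hm' (Or.inl h)
      rwa [abs_of_nonneg h2]
    · subst h
      rcases Nat.lt_trichotomy m m' with h' | h' | h'
      · obtain ⟨h1, h2⟩ := main n m n m' hn hm hn hm' (Or.inr ⟨rfl, h'⟩)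
        rwa [abs_of_nonneg h2]
      · subst h'
        simp [sub_self]
      · obtain ⟨h1, h2⟩ := main n m' n m hn hm' hn hm (Or.inr ⟨rfl, h'⟩)
        rw [abs_sub_comm (err n m), abs_sub_comm (c n * (1 + a m))]
        rwa [abs_of_nonneg h2]
    · obtain ⟨h1, h2⟩ := main n' m' n m hn' hm' hn hm (Or.inl h)
      rw [abs_sub_comm (err n m), abs_sub_comm (c n * (1 + a m))]
      rwa [abs_of_nonneg h2]
  -- ## Part 8: the function e and its extension
  set Q : ℝ → Prop := fun x => ∃ p : ℕ × ℕ, 1 ≤ p.1 ∧ 1 ≤ p.2 ∧ x = c p.1 * (1 + a p.2)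
    with hQ
  set pk : ℝ → ℕ × ℕ := fun x => if h : Q x then h.choose else (1,1) with hpkdef
  have hpk : ∀ x, Q x → (1 ≤ (pk x).1 ∧ 1 ≤ (pk x).2 ∧ x = c (pk x).1 * (1 + a (pk x).2)) := by
    intro x h
    simp only [hpkdef, dif_pos h]
    exact h.choose_spec
  have hFQ : ∀ x, x ∈ F → Q x := by
    intro x hx
    rw [hF] at hx
    obtain ⟨n, hn, m, hm, hx⟩ := hx
    refine ⟨(n.toNat, m), by omega, hm, ?_⟩
    have hnn : ((n.toNat : ℤ)) = n := Int.toNat_of_nonneg (by linarith)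
    show x = (3:ℝ) ^ (-((n.toNat:ℕ) : ℤ)) * (1 + a m)
    rw [hnn]
    exact hx
  set e : ℝ → ℝ := fun x => err (pk x).1 (pk x).2 with he
  have hlip : LipschitzOnWith (Real.toNNReal (lam/2)) e F := by
    rw [lipschitzOnWith_iff_dist_le_mul]
    intro x hx x' hx'
    rw [Real.dist_eq, Real.dist_eq, Real.coe_toNNReal _ (by positivity)]
    obtain ⟨hn1, hm1, hxe⟩ := hpk x (hFQ x hx)
    obtain ⟨hn1', hm1', hxe'⟩ := hpk x' (hFQ x' hx')
    have h9 := key _ _ _ _ hn1 hm1 hn1' hm1'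
    rw [← hxe, ← hxe'] at h9
    exact h9
  obtain ⟨g, hglip, hgeq⟩ := hlip.extend_real
  -- ## Part 9: assemble f
  refine ⟨fun x => t₀ + lam * x + g x, ⟨2/lam + 3*lam/2 + 2, ?_, ?_⟩, ?_⟩
  · have : 0 < 2/lam := by positivity
    nlinarith
  · intro x x'
    have hgb : |g x - g x'| ≤ lam/2 * |x - x'| := by
      have h1 := hglip.dist_le_mul x x'
      rw [Real.dist_eq, Real.dist_eq, Real.coe_toNNReal _ (by positivity)] at h1
      exact h1
    have habs : ∀ A B : ℝ, |A| - |B| ≤ |A + B| := by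
      intro A B
      have h2 := abs_add_le (A + B) (-B)
      simp at h2
      linarith [h2]
    have hL : 0 < 2/lam + 3*lam/2 + 2 := by positivity
    have hexp : (t₀ + lam * x + g x) - (t₀ + lam * x' + g x') = lam * (x - x') + (g x - g x') := by
      ring
    constructor
    · rw [hexp]
      have h3 : lam/2 * |x - x'| ≤ |lam * (x - x') + (g x - g x')| := by
        have h4 := habs (lam * (x - x')) (g x - g x')
        rw [abs_mul, abs_of_pos hlam] at h4
        linarith
      refine le_trans ?_ h3
      have hinv : (2/lam + 3*lam/2 + 2)⁻¹ ≤ lam/2 := by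
        have h6 : (0:ℝ) < 2/lam := by positivity
        have h7 : 2/lam ≤ 2/lam + 3*lam/2 + 2 := by nlinarith
        calc (2/lam + 3*lam/2 + 2)⁻¹ ≤ (2/lam)⁻¹ := inv_anti₀ h6 h7
          _ = lam/2 := by rw [inv_div]
      exact mul_le_mul_of_nonneg_right hinv (abs_nonneg _)
    · rw [hexp]
      calc |lam * (x - x') + (g x - g x')| ≤ |lam * (x - x')| + |g x - g x'| := abs_add_le _ _
        _ ≤ lam * |x - x'| + lam/2 * |x - x'| := by
            rw [abs_mul, abs_of_pos hlam]; linarith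
        _ ≤ (2/lam + 3*lam/2 + 2) * |x - x'| := by
            have h5 : 0 < 2/lam := by positivity
            nlinarith [abs_nonneg (x - x')]
  · rintro z ⟨x, hxF, rfl⟩
    obtain ⟨hn1, hm1, hxe⟩ := hpk x (hFQ x hxF)
    have hgx : g x = e x := (hgeq hxF).symm
    have h8 : lam * x = lam * (c (pk x).1 * (1 + a (pk x).2)) := by rw [← hxe]
    have hthis : t₀ + lam * x + g x = y (pk x).1 (pk x).2 := by
      rw [hgx]
      have h10 : e x = y (pk x).1 (pk x).2 - t₀ - lam * (c (pk x).1 * (1 + a (pk x).2)) := by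
        simp only [he, herrdef]
      rw [h10]
      linarith
    show t₀ + lam * x + g x ∈ E
    rw [hthis]
    exact ((hy _ _ hn1 hm1).1)
end
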